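/- Let F be a field and A a central simple F-algebra. Then the F-dimension of A is a perfect square: there exists a positive integer q with dim_F(A) = q². -/

import Mathlib

open Module

/-- Span of a right-stable set is right-stable. -/
lemma span_right_stable {B : Type*} [Ring B] {S : Set B}
    (h : ∀ x ∈ S, ∀ b : B, x * b ∈ S) :
    ∀ x ∈ Submodule.span B S, ∀ b : B, x * b ∈ Submodule.span B S := by
  intro x hx b
  have hmap : Submodule.map (LinearMap.toSpanSingleton B B b) (Submodule.span B S)
      ≤ Submodule.span B S := by
    rw [Submodule.map_span]
    apply Submodule.span_le.2
    rintro _ ⟨s, hs, rfl⟩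
    have : s • b = s * b := smul_eq_mul (α := B) (a := s) (b := b)
    rw [LinearMap.toSpanSingleton_apply, this]
    exact Submodule.subset_span (h s hs b)
  have hx' : x * b = LinearMap.toSpanSingleton B B b x := by
    rw [LinearMap.toSpanSingleton_apply, smul_eq_mul]
  rw [hx']
  exact hmap ⟨x, hx, rfl⟩

/-- In a simple ring, a nonzero right-stable left ideal is everything. -/
lemma left_ideal_eq_top {B : Type*} [Ring B] [IsSimpleRing B] (T : Submodule B B)
    (hne : T ≠ ⊥) (hr : ∀ x ∈ T, ∀ b : B, x * b ∈ T) : T = ⊤ := by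
  let I : TwoSidedIdeal B := TwoSidedIdeal.mk' (T : Set B) T.zero_mem
    (fun hx hy => T.add_mem hx hy) (fun hx => T.neg_mem hx)
    (fun {x y} hy => T.smul_mem x hy) (fun {x y} hx => hr _ hx y)
  have hmem : ∀ z : B, z ∈ I ↔ z ∈ T := fun z => TwoSidedIdeal.mem_mk' _ _ _ _ _ _ z
  rcases IsSimpleRing.simple.eq_bot_or_eq_top I with h | h
  · exact absurd (eq_bot_iff.2 fun x hx => by
      have := (hmem x).2 hx
      rw [h, TwoSidedIdeal.mem_bot] at this
      simp [this]) hne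
  · have h1 : (1 : B) ∈ T := (hmem 1).1 (h ▸ TwoSidedIdeal.mem_top _)
    exact eq_top_iff.2 fun z _ => by simpa using T.smul_mem z h1

section AlgClosed

variable (K B : Type*) [Field K] [IsAlgClosed K] [Ring B] [Algebra K B]
  [FiniteDimensional K B] [Nontrivial B] [IsSimpleRing B]

/-- Over an algebraically closed field, a finite-dimensional simple algebra has
square dimension. -/
lemma dim_sq_of_algClosed : ∃ k : ℕ, 0 < k ∧ finrank K B = k ^ 2 := by
  classical
  haveI : IsArtinian B B := isArtinian_of_tower K inferInstance
  -- find a simple left ideal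
  obtain ⟨M, hM⟩ : ∃ M : Submodule B B, IsAtom M := by
    rcases (IsAtomic.eq_bot_or_exists_atom_le (⊤ : Submodule B B)) with h | ⟨M, hM, -⟩
    · exact absurd h top_ne_bot
    · exact ⟨M, hM⟩
  haveI hsimple : IsSimpleModule B ↥M := isSimpleModule_iff_isAtom.2 hM
  haveI : Nontrivial ↥M := IsSimpleModule.nontrivial B ↥M
  -- every `B`-endomorphism of `M` is a `K`-scalar
  letI : DivisionRing (Module.End B M) := Module.End.instDivisionRing
  haveI : IsDomain (Module.End B M) := inferInstance
  haveI : FiniteDimensional K (Module.End B M) :=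
    FiniteDimensional.of_injective (LinearMap.restrictScalarsₗ K B M M K)
      (LinearMap.restrictScalars_injective K)
  haveI : Algebra.IsIntegral K (Module.End B M) := Algebra.IsIntegral.of_finite K _
  have hscalar : ∀ d : Module.End B M, ∃ c : K, ∀ y : M, d y = c • y := by
    intro d
    obtain ⟨c, hc⟩ := (IsAlgClosed.algebraMap_bijective_of_isIntegral
      (k := K) (K := Module.End B M)).2 d
    refine ⟨c, fun y => ?_⟩
    rw [← hc, Algebra.algebraMap_eq_smul_one]
    simp
  -- the representation `ρ : B →ₐ[K] End K M`
  let ρ : B →ₐ[K] Module.End K ↥M :=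
  { toFun := fun b =>
      { toFun := fun y => ⟨b * ↑y, M.smul_mem b y.2⟩
        map_add' := fun y z => by ext; simp [mul_add]
        map_smul' := fun c y => by ext; simp [Algebra.mul_smul_comm] }
    map_one' := by ext y; simp
    map_mul' := fun a b => by ext y; simp [mul_assoc]
    map_zero' := by ext y; simp
    map_add' := fun a b => by ext y; simp [add_mul]
    commutes' := fun c => by
      ext y
      simp [Module.algebraMap_end_apply, Algebra.smul_def] }
  haveI : Nontrivial (Module.End K ↥M) := by
    obtain ⟨y, hy⟩ := exists_ne (0 : ↥M)
    exact ⟨1, 0, fun h => hy (by simpa using LinearMap.congr_fun h y)⟩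
  have hinj : Function.Injective ρ := RingHom.injective (ρ.toRingHom)
  -- key commutation: `K`-endomorphisms commute with right multiplications
  have hcomm : ∀ (f : Module.End K ↥M) (y x : ↥M),
      (↑(f y) : B) * ↑x = ↑(f ⟨(↑y : B) * ↑x, M.smul_mem _ x.2⟩) := by
    intro f y x
    let d : Module.End B ↥M :=
    { toFun := fun z => ⟨(↑z : B) * ↑x, M.smul_mem _ x.2⟩
      map_add' := fun y z => by ext; simp [add_mul]
      map_smul' := fun b z => by ext; simp [mul_assoc] }
    obtain ⟨c, hc⟩ := hscalar d
    have h1 : (⟨(↑y : B) * ↑x, M.smul_mem _ x.2⟩ : ↥M) = c • y := hc y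
    have h2 : (⟨(↑(f y) : B) * ↑x, M.smul_mem _ x.2⟩ : ↥M) = c • (f y) := hc (f y)
    calc (↑(f y) : B) * ↑x = ↑(c • f y) := congrArg Subtype.val h2
    _ = ↑(f (c • y)) := by rw [map_smul]
    _ = ↑(f ⟨(↑y : B) * ↑x, M.smul_mem _ x.2⟩) := by rw [← h1]
  -- surjectivity of ρ
  have hsurj : Function.Surjective ρ := by
    -- the two-sided ideal generated by `M` is everything
    set T : Submodule B B := Submodule.span B {z | ∃ m ∈ M, ∃ b : B, z = m * b} with hT
    have hTstable := span_right_stable (B := B) (S := {z | ∃ m ∈ M, ∃ b : B, z = m * b})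
      (by rintro _ ⟨m, hm, b, rfl⟩ b'; exact ⟨m, hm, b * b', mul_assoc _ _ _⟩)
    have hMne : M ≠ ⊥ := hM.1
    have hTne : T ≠ ⊥ := by
      intro h
      apply hMne
      refine eq_bot_iff.2 fun m hm => ?_
      have : m ∈ T := Submodule.subset_span ⟨m, hm, 1, (mul_one m).symm⟩
      rw [h] at this
      simpa using this
    have hTtop : T = ⊤ := left_ideal_eq_top T hTne hTstable
    have h1T : (1 : B) ∈ T := hTtop ▸ Submodule.mem_top
    rw [hT] at h1T
    obtain ⟨n, cc, v, hv⟩ := Submodule.mem_span_set'.1 h1T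
    -- `1 = ∑ i, m i * b i` with `m i ∈ M`
    choose m hm b hb using fun i => (v i).2
    have hone : (1 : B) = ∑ i, (cc i * m i) * b i := by
      rw [← hv]
      refine Finset.sum_congr rfl fun i _ => ?_
      rw [smul_eq_mul, hb i, mul_assoc]
    have hmem : ∀ i, cc i * m i ∈ M := fun i => M.smul_mem (cc i) (hm i)
    intro f
    refine ⟨∑ i, (↑(f ⟨cc i * m i, hmem i⟩) : B) * b i, ?_⟩
    apply LinearMap.ext
    intro y
    apply Subtype.val_injective
    have hco : (↑(ρ (∑ i, (↑(f ⟨cc i * m i, hmem i⟩) : B) * b i) y) : B)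
        = ∑ i, (↑(f ⟨cc i * m i, hmem i⟩) : B) * (b i * ↑y) := by
      show (∑ i, (↑(f ⟨cc i * m i, hmem i⟩) : B) * b i) * ↑y = _
      rw [Finset.sum_mul]
      exact Finset.sum_congr rfl fun i _ => mul_assoc _ _ _
    rw [hco]
    have hterm : ∀ i : Fin n, (↑(f ⟨cc i * m i, hmem i⟩) : B) * ((b i) * ↑y)
        = ↑(f ⟨(cc i * m i) * ((b i) * ↑y), M.smul_mem _ (M.smul_mem _ y.2)⟩) := by
      intro i
      exact hcomm f ⟨cc i * m i, hmem i⟩ ⟨(b i) * ↑y, M.smul_mem _ y.2⟩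
    rw [Finset.sum_congr rfl fun i _ => hterm i]
    have hsum : (∑ i, f ⟨(cc i * m i) * ((b i) * ↑y), M.smul_mem _ (M.smul_mem _ y.2)⟩) = f y := by
      rw [← map_sum]
      congr 1
      apply Subtype.val_injective
      push_cast
      rw [Finset.sum_congr rfl fun (i : Fin n) _ => (mul_assoc (cc i * m i) (b i) (↑y : B)).symm,
        ← Finset.sum_mul, ← hone, one_mul]
    calc (∑ i, (↑(f ⟨(cc i * m i) * ((b i) * ↑y), M.smul_mem _ (M.smul_mem _ y.2)⟩) : B))
        = ↑(∑ i, f ⟨(cc i * m i) * ((b i) * ↑y), M.smul_mem _ (M.smul_mem _ y.2)⟩) := by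
          push_cast; rfl
      _ = ↑(f y) := by rw [hsum]
  -- conclude
  have e : B ≃ₐ[K] Module.End K ↥M := AlgEquiv.ofBijective ρ ⟨hinj, hsurj⟩
  refine ⟨finrank K ↥M, finrank_pos, ?_⟩
  rw [e.toLinearEquiv.finrank_eq]
  exact (Module.finrank_linearMap (R := K) (S := K) (M := ↥M) (N := ↥M)).trans (pow_two _).symm

end AlgClosed

open TensorProduct in
theorem tensor_simple (F K A : Type*) [Field F] [Field K] [Algebra F K]
    [Ring A] [Algebra F A] [Nontrivial A] [Algebra.IsCentral F A] [IsSimpleRing A] :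
    IsSimpleRing (K ⊗[F] A) := by
  classical
  set ι := Basis.ofVectorSpaceIndex F K with hι
  set e : Basis ι F K := Basis.ofVectorSpace F K with he
  set Φ : K ⊗[F] A ≃ₗ[F] (ι →₀ A) :=
    (TensorProduct.congr e.repr (LinearEquiv.refl F A)).trans
      (TensorProduct.finsuppScalarLeft F A ι) with hΦ
  have hΦtmul : ∀ (k : K) (a : A) (j : ι), Φ (k ⊗ₜ[F] a) j = e.repr k j • a := by
    intro k a j
    simp [hΦ, TensorProduct.finsuppScalarLeft_apply_tmul_apply]
  have hΦsingle : ∀ (j : ι) (a : A), Φ (e j ⊗ₜ[F] a) = Finsupp.single j a := by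
    intro j a
    ext j'
    rw [hΦtmul]
    simp [Finsupp.single_apply, eq_comm]
  have hmul : ∀ (u v' : A) (x' : K ⊗[F] A) (j : ι),
      Φ ((1 ⊗ₜ[F] u) * x' * (1 ⊗ₜ[F] v')) j = u * Φ x' j * v' := by
    intro u v' x'
    induction x' using TensorProduct.induction_on with
    | zero => intro j; simp
    | tmul k a =>
      intro j
      rw [Algebra.TensorProduct.tmul_mul_tmul, Algebra.TensorProduct.tmul_mul_tmul,
        one_mul, mul_one, hΦtmul, hΦtmul]
      rw [mul_smul_comm, smul_mul_assoc]
    | add p q hp hq =>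
      intro j
      simp only [mul_add, add_mul, map_add, Finsupp.add_apply, hp j, hq j]
  have hrepr : ∀ x : K ⊗[F] A, x = ∑ j ∈ (Φ x).support, e j ⊗ₜ[F] (Φ x j) := by
    intro x
    apply Φ.injective
    rw [map_sum, Finset.sum_congr rfl fun j _ => hΦsingle j (Φ x j)]
    exact (Finsupp.sum_single (Φ x)).symm
  have hnt : Nontrivial (K ⊗[F] A) := by
    have : Nonempty ι := e.index_nonempty
    obtain ⟨j⟩ := this
    refine ⟨e j ⊗ₜ[F] 1, 0, fun h => ?_⟩
    have := hΦsingle j 1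
    rw [h, map_zero] at this
    exact (one_ne_zero : (1:A) ≠ 0) (Finsupp.single_eq_zero.1 this.symm)
  refine ⟨⟨fun I => ?_⟩⟩
  by_cases hI : I = ⊥
  · exact Or.inl hI
  refine Or.inr ?_
  obtain ⟨x₀, hx₀I, hx₀mem⟩ := SetLike.exists_of_lt (show (⊥ : TwoSidedIdeal (K ⊗[F] A)) < I from bot_lt_iff_ne_bot.mpr hI)
  have hx₀ : x₀ ≠ 0 := fun h => hx₀mem (by rw [h]; exact (TwoSidedIdeal.mem_bot _).2 rfl)
  set Sset : Set ℕ := {n | ∃ x, x ∈ I ∧ x ≠ 0 ∧ (Φ x).support.card = n} with hSset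
  have hSne : Sset.Nonempty := ⟨_, x₀, hx₀I, hx₀, rfl⟩
  obtain ⟨x, hxI, hx0, hxcard⟩ := Nat.sInf_mem hSne
  have hmin : ∀ y, y ∈ I → y ≠ 0 → sInf Sset ≤ (Φ y).support.card :=
    fun y h1 h2 => Nat.sInf_le ⟨y, h1, h2, rfl⟩
  set s := (Φ x).support with hsdef
  have hs : s.Nonempty := Finsupp.support_nonempty_iff.2
    (fun h => hx0 (by simpa using Φ.map_eq_zero_iff.1 h))
  obtain ⟨j0, hj0⟩ := hs
  set a0 := Φ x j0 with ha0def
  have ha0 : a0 ≠ 0 := Finsupp.mem_support_iff.1 hj0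
  -- 1 is a combination of two-sided multiples of a0
  have hJ : (1 : A) ∈ Submodule.span A (Set.range fun u : A => a0 * u) := by
    have htop : Submodule.span A (Set.range fun u : A => a0 * u) = ⊤ := by
      refine left_ideal_eq_top _ ?_ ?_
      · intro h
        apply ha0
        have : a0 ∈ Submodule.span A (Set.range fun u : A => a0 * u) :=
          Submodule.subset_span ⟨1, mul_one a0⟩
        rw [h] at this
        simpa using this
      · exact span_right_stable (by rintro _ ⟨u, rfl⟩ b; exact ⟨u * b, (mul_assoc _ _ _).symm⟩)
    rw [htop]
    trivial
  obtain ⟨n, cc, v, hv⟩ := Submodule.mem_span_set'.1 hJ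
  choose u hu using fun i => (v i).2
  have hone : ∑ i, cc i * a0 * u i = 1 := by
    rw [← hv]
    refine Finset.sum_congr rfl fun i _ => ?_
    rw [smul_eq_mul, ← hu i, mul_assoc]
  set y := ∑ i, (1 ⊗ₜ[F] cc i) * x * (1 ⊗ₜ[F] u i) with hy
  have hyI : y ∈ I := sum_mem fun i _ => I.mul_mem_right _ _ (I.mul_mem_left _ _ hxI)
  have hyc : ∀ j, Φ y j = ∑ i, cc i * Φ x j * u i := by
    intro j
    rw [hy, map_sum, Finsupp.finset_sum_apply]
    exact Finset.sum_congr rfl fun i _ => hmul _ _ _ _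
  have hyj0 : Φ y j0 = 1 := by rw [hyc, ← ha0def, hone]
  have hy0 : y ≠ 0 := fun h => (one_ne_zero : (1:A) ≠ 0) (by rw [← hyj0, h, map_zero]; simp)
  have hysupp : (Φ y).support ⊆ s := by
    intro j hj
    rw [Finsupp.mem_support_iff] at hj
    by_contra h
    apply hj
    rw [hsdef, Finsupp.notMem_support_iff] at h
    rw [hyc, Finset.sum_congr rfl fun i _ => by rw [h, mul_zero, zero_mul]]
    simp
  have hyeq : (Φ y).support = s :=
    Finset.eq_of_subset_of_card_le hysupp (by rw [hxcard]; exact hmin y hyI hy0)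
  have hcentral : ∀ j (w : A), Φ y j * w = w * Φ y j := by
    intro j w
    set z := y * (1 ⊗ₜ[F] w) - (1 ⊗ₜ[F] w) * y with hz
    have hzI : z ∈ I := sub_mem (I.mul_mem_right _ _ hyI) (I.mul_mem_left _ _ hyI)
    have hzc : ∀ j', Φ z j' = Φ y j' * w - w * Φ y j' := by
      intro j'
      rw [hz, map_sub, Finsupp.sub_apply]
      have h1 : y * (1 ⊗ₜ[F] w) = (1 ⊗ₜ[F] (1:A)) * y * (1 ⊗ₜ[F] w) := by
        rw [← Algebra.TensorProduct.one_def, one_mul]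
      have h2 : (1 ⊗ₜ[F] w) * y = (1 ⊗ₜ[F] w) * y * (1 ⊗ₜ[F] (1:A)) := by
        rw [← Algebra.TensorProduct.one_def, mul_one]
      rw [h1, h2, hmul, hmul, one_mul, mul_one]
    have hz0 : z = 0 := by
      by_contra h
      have h1 := hmin z hzI h
      have h2 : (Φ z).support ⊆ s.erase j0 := by
        intro j' hj'
        rw [Finsupp.mem_support_iff] at hj'
        rw [Finset.mem_erase]
        constructor
        · rintro rfl
          apply hj'
          rw [hzc, hyj0, one_mul, mul_one, sub_self]
        · by_contra hns
          apply hj'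
          rw [← hyeq, Finsupp.notMem_support_iff] at hns
          rw [hzc, hns, zero_mul, mul_zero, sub_self]
      have h3 : (Φ z).support.card < s.card :=
        lt_of_le_of_lt (Finset.card_le_card h2) (Finset.card_erase_lt_of_mem hj0)
      rw [hxcard] at h3
      exact absurd (lt_of_le_of_lt h1 h3) (lt_irrefl _)
    have := hzc j
    rw [hz0, map_zero, Finsupp.zero_apply] at this
    exact sub_eq_zero.1 this.symm
  have hsc : ∀ j, ∃ cf : F, Φ y j = algebraMap F A cf := by
    intro j
    exact (Algebra.IsCentral.mem_center_iff F).1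
      (Subalgebra.mem_center_iff.2 fun b => (hcentral j b).symm)
  choose cf hcf using hsc
  set c : K := ∑ j ∈ s, cf j • e j with hc
  have hyrep : y = c ⊗ₜ[F] (1 : A) := by
    conv_lhs => rw [hrepr y, hyeq]
    rw [hc, TensorProduct.sum_tmul]
    refine Finset.sum_congr rfl fun j hj => ?_
    rw [hcf j, Algebra.algebraMap_eq_smul_one, TensorProduct.smul_tmul]
  have hcne : c ≠ 0 := fun h => hy0 (by rw [hyrep, h, TensorProduct.zero_tmul])
  have h1I : (1 : K ⊗[F] A) ∈ I := by
    have h := I.mul_mem_left (c⁻¹ ⊗ₜ[F] (1 : A)) y hyI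
    rw [hyrep, Algebra.TensorProduct.tmul_mul_tmul, inv_mul_cancel₀ hcne, mul_one] at h
    rwa [Algebra.TensorProduct.one_def]
  exact eq_top_iff.2 fun z _ => by simpa using I.mul_mem_left z 1 h1I


/-- The `F`-dimension of a central simple `F`-algebra is a perfect square. -/
theorem finrank_central_simple_is_square
    (F A : Type*) [Field F]
    [Ring A] [Algebra F A] [FiniteDimensional F A] [Nontrivial A]
    [Algebra.IsCentral F A] [IsSimpleRing A] :
    ∃ q : ℕ, 0 < q ∧ Module.finrank F A = q ^ 2 := by
  let K := AlgebraicClosure F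
  haveI : IsSimpleRing (TensorProduct F K A) := tensor_simple F K A
  haveI : Nontrivial (TensorProduct F K A) := inferInstance
  haveI : FiniteDimensional K (TensorProduct F K A) := Module.Finite.base_change F K A
  obtain ⟨q, hq, hdim⟩ := dim_sq_of_algClosed K (TensorProduct F K A)
  exact ⟨q, hq, by rwa [Module.finrank_baseChange] at hdim⟩
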